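/- Let k be an arbitrary field, let A be a finitely generated k-algebra, let X = Spec(A), let φ: X → X be a morphism of affine k-schemes (given on points by φ(𝔭) = Φ⁻¹(𝔭) for a k-algebra homomorphism Φ: A → A), let α ∈ X be a point (a prime ideal of A, not necessarily closed), and let V = V(𝔞) be a Zariski-closed subset of X. Then {n ∈ ℕ : φⁿ(α) ∈ V} = A′ ∪ B, where A′ is a (possibly empty) finite union of infinite arithmetic progressions and B is a set of Banach density zero. -/

import Mathlib

/-- A set `S ⊆ ℕ` has Banach density zero: for every `ε > 0` there exists `N` such that
`|S ∩ I| ≤ ε·|I|` for every interval `I ⊆ ℕ` of length at least `N`. -/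
def BanachDensityZero (S : Set ℕ) : Prop :=
  ∀ ε : ℝ, 0 < ε → ∃ N : ℕ, ∀ a n : ℕ, N ≤ n →
    (Nat.card ↥(S ∩ Set.Ico a (a + n)) : ℝ) ≤ ε * n


open Set TopologicalSpace

lemma cnt_eq (S : Set ℕ) (a n : ℕ) :
    (Nat.card ↥(S ∩ Set.Ico a (a + n)) : ℕ) = (S ∩ Set.Ico a (a + n)).ncard :=
  Nat.card_coe_set_eq _

lemma cnt_finite (S : Set ℕ) (a n : ℕ) : (S ∩ Set.Ico a (a + n)).Finite :=
  (Set.finite_Ico a (a+n)).subset (inter_subset_right)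

lemma bdz_subset {S T : Set ℕ} (h : S ⊆ T) (hT : BanachDensityZero T) :
    BanachDensityZero S := by
  intro ε hε
  obtain ⟨N, hN⟩ := hT ε hε
  refine ⟨N, fun a n hn => ?_⟩
  refine le_trans ?_ (hN a n hn)
  have : (S ∩ Set.Ico a (a+n)).ncard ≤ (T ∩ Set.Ico a (a+n)).ncard :=
    Set.ncard_le_ncard (inter_subset_inter_left _ h) (cnt_finite T a n)
  rw [cnt_eq, cnt_eq]
  exact_mod_cast this

lemma bdz_union {S T : Set ℕ} (hS : BanachDensityZero S) (hT : BanachDensityZero T) :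
    BanachDensityZero (S ∪ T) := by
  intro ε hε
  obtain ⟨N₁, h₁⟩ := hS (ε/2) (by linarith)
  obtain ⟨N₂, h₂⟩ := hT (ε/2) (by linarith)
  refine ⟨max N₁ N₂, fun a n hn => ?_⟩
  have e1 := h₁ a n (le_trans (le_max_left _ _) hn)
  have e2 := h₂ a n (le_trans (le_max_right _ _) hn)
  have : ((S ∪ T) ∩ Set.Ico a (a+n)).ncard ≤
      (S ∩ Set.Ico a (a+n)).ncard + (T ∩ Set.Ico a (a+n)).ncard := by
    rw [union_inter_distrib_right]
    exact le_trans (Set.ncard_union_le _ _) le_rfl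
  rw [cnt_eq] at e1 e2 ⊢
  have := (Nat.cast_le (α := ℝ)).2 this
  push_cast at this ⊢
  linarith

lemma bdz_finite {S : Set ℕ} (h : S.Finite) : BanachDensityZero S := by
  intro ε hε
  refine ⟨⌈(S.ncard : ℝ)/ε⌉₊ + 1, fun a n hn => ?_⟩
  have h1 : (S ∩ Set.Ico a (a+n)).ncard ≤ S.ncard :=
    Set.ncard_le_ncard inter_subset_left h
  rw [cnt_eq]
  have h2 : ((S.ncard : ℝ)/ε) ≤ n := by
    calc ((S.ncard : ℝ)/ε) ≤ ⌈(S.ncard : ℝ)/ε⌉₊ := Nat.le_ceil _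
    _ ≤ n := by exact_mod_cast le_trans (Nat.le_succ _) hn
  have h3 : (S.ncard : ℝ) ≤ ε * n := by
    rw [div_le_iff₀ hε] at h2; linarith [h2]
  exact le_trans (by exact_mod_cast h1) h3

lemma block_count (S : Set ℕ) (D a n : ℕ) (hD : 1 ≤ D) :
    (S ∩ Set.Ico a (a+n)).ncard ≤ (n / D + 1) +
      ∑ d ∈ Finset.Icc 1 D, ({m | m ∈ S ∧ m + d ∈ S} ∩ Set.Ico a (a+n)).ncard := by
  classical
  have hfin : (S ∩ Set.Ico a (a+n)).Finite :=
    (Set.finite_Ico a (a+n)).subset inter_subset_right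
  have hfind : ∀ d, ({m | m ∈ S ∧ m + d ∈ S} ∩ Set.Ico a (a+n)).Finite := fun d =>
    (Set.finite_Ico a (a+n)).subset inter_subset_right
  set T : Finset ℕ := hfin.toFinset with hT
  have hTmem : ∀ {s}, s ∈ T → s ∈ S ∧ a ≤ s ∧ s < a + n := by
    intro s hs
    rw [hT, Set.Finite.mem_toFinset] at hs
    exact ⟨hs.1, hs.2.1, hs.2.2⟩
  set blk : ℕ → ℕ := fun s => (s - a)/D with hblk
  set P : ℕ → Finset ℕ := fun s => T.filter (fun t => blk t = blk s ∧ t < s) with hP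
  set g : ℕ → ℕ × ℕ := fun s =>
    if h : (P s).Nonempty then (s - (P s).max' h, (P s).max' h) else (0, blk s) with hg
  set target : Finset (ℕ × ℕ) :=
    ((Finset.range (n/D+1)).image (fun q => (0,q))) ∪
    ((Finset.Icc 1 D).biUnion (fun d =>
      ((hfind d).toFinset).image (fun m => (d,m)))) with htarget
  have key : T.card ≤ target.card := by
    apply Finset.card_le_card_of_injOn g
    · -- maps into target
      intro s hs
      obtain ⟨hsS, hsa, hsn⟩ := hTmem hs
      by_cases h : (P s).Nonempty
      · set p := (P s).max' h with hpdef
        have hm : p ∈ T.filter (fun t => blk t = blk s ∧ t < s) := (P s).max'_mem h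
        obtain ⟨hmT, hmb, hms⟩ := Finset.mem_filter.1 hm
        obtain ⟨hpS, hpa, hpn⟩ := hTmem hmT
        have hsp : s - p ≤ D := by
          have hq : (p - a)/D = (s - a)/D := hmb
          have A : D * ((p-a)/D) ≤ p - a := Nat.mul_div_le (p-a) D
          have C : s - a < (p - a) + D := by
            calc s - a = D * ((s-a)/D) + (s-a)%D := (Nat.div_add_mod _ _).symm
            _ < D * ((s-a)/D) + D := Nat.add_lt_add_left (Nat.mod_lt _ hD) _
            _ = D * ((p-a)/D) + D := by rw [hq]
            _ ≤ (p - a) + D := Nat.add_le_add_right A D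
          omega
        have h1 : 1 ≤ s - p := by omega
        rw [hg]
        simp only [dif_pos h]
        rw [htarget]
        apply Finset.mem_union_right
        rw [Finset.mem_biUnion]
        refine ⟨s - p, Finset.mem_Icc.2 ⟨h1, hsp⟩, ?_⟩
        rw [Finset.mem_image]
        refine ⟨p, ?_, rfl⟩
        rw [Set.Finite.mem_toFinset]
        exact ⟨⟨hpS, by rwa [Nat.add_sub_cancel' (le_of_lt hms)]⟩, hpa, hpn⟩
      · rw [hg]
        simp only [dif_neg h]
        rw [htarget]
        apply Finset.mem_union_left
        rw [Finset.mem_image]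
        refine ⟨blk s, ?_, rfl⟩
        rw [Finset.mem_range]
        have h2 : (s - a)/D ≤ n/D := Nat.div_le_div_right (by omega : s - a ≤ n)
        have h3 : blk s = (s-a)/D := rfl
        omega
    · -- injective on T
      intro s hs s' hs' hgs
      by_cases h1 : (P s).Nonempty <;> by_cases h2 : (P s').Nonempty
      · rw [hg] at hgs
        simp only [dif_pos h1, dif_pos h2, Prod.mk.injEq] at hgs
        have hm : (P s).max' h1 ∈ T.filter (fun t => blk t = blk s ∧ t < s) := (P s).max'_mem h1
        have hm' : (P s').max' h2 ∈ T.filter (fun t => blk t = blk s' ∧ t < s') := (P s').max'_mem h2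
        have e1 := (Finset.mem_filter.1 hm).2.2
        have e2 := (Finset.mem_filter.1 hm').2.2
        omega
      · rw [hg] at hgs
        simp only [dif_pos h1, dif_neg h2, Prod.mk.injEq] at hgs
        have hm : (P s).max' h1 ∈ T.filter (fun t => blk t = blk s ∧ t < s) := (P s).max'_mem h1
        have e1 := (Finset.mem_filter.1 hm).2.2
        omega
      · rw [hg] at hgs
        simp only [dif_neg h1, dif_pos h2, Prod.mk.injEq] at hgs
        have hm' : (P s').max' h2 ∈ T.filter (fun t => blk t = blk s' ∧ t < s') := (P s').max'_mem h2
        have e1 := (Finset.mem_filter.1 hm').2.2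
        omega
      · rw [hg] at hgs
        simp only [dif_neg h1, dif_neg h2, Prod.mk.injEq] at hgs
        rcases lt_trichotomy s s' with h | h | h
        · exact absurd ⟨s, Finset.mem_filter.2 ⟨hs, hgs.2 ▸ rfl, h⟩⟩ h2
        · exact h
        · exact absurd ⟨s', Finset.mem_filter.2 ⟨hs', hgs.2 ▸ rfl, h⟩⟩ h1
  have hcard : (S ∩ Set.Ico a (a+n)).ncard = T.card := Set.ncard_eq_toFinset_card _ hfin
  have htc : target.card ≤ (n / D + 1) +
      ∑ d ∈ Finset.Icc 1 D, ({m | m ∈ S ∧ m + d ∈ S} ∩ Set.Ico a (a+n)).ncard := by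
    rw [htarget]
    refine le_trans (Finset.card_union_le _ _) (add_le_add ?_ ?_)
    · exact le_trans (Finset.card_image_le) (by simp)
    · refine le_trans (Finset.card_biUnion_le) (Finset.sum_le_sum fun d _ => ?_)
      refine le_trans (Finset.card_image_le) ?_
      rw [Set.ncard_eq_toFinset_card _ (hfind d)]
  omega

lemma exists_diff_not_bdz {S : Set ℕ} (h : ¬ BanachDensityZero S) :
    ∃ d : ℕ, 1 ≤ d ∧ ¬ BanachDensityZero {m | m ∈ S ∧ m + d ∈ S} := by
  by_contra hc
  push_neg at hc
  apply h
  intro ε hε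
  set D : ℕ := ⌈(4:ℝ)/ε⌉₊ + 1 with hDdef
  have hD1 : 1 ≤ D := Nat.le_add_left 1 _
  have hDε : (4:ℝ)/ε ≤ D := by
    have h1 := Nat.le_ceil ((4:ℝ)/ε)
    have h2 : ((⌈(4:ℝ)/ε⌉₊ : ℝ)) ≤ D := by rw [hDdef]; push_cast; linarith
    linarith
  have hε' : 0 < ε/(4*D) := by positivity
  have H : ∀ d ∈ Finset.Icc 1 D, ∃ N : ℕ, ∀ a n : ℕ, N ≤ n →
      (Nat.card ↥({m | m ∈ S ∧ m + d ∈ S} ∩ Set.Ico a (a + n)) : ℝ) ≤ (ε/(4*D)) * n := by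
    intro d hd
    exact hc d (Finset.mem_Icc.1 hd).1 (ε/(4*D)) hε'
  choose! N hN using H
  refine ⟨max ((Finset.Icc 1 D).sup N) (⌈(4:ℝ)/ε⌉₊ + 1), fun a n hn => ?_⟩
  have hn1 : ((Finset.Icc 1 D).sup N) ≤ n := le_trans (le_max_left _ _) hn
  have hn2 : (4:ℝ)/ε ≤ n := by
    have h3 : (⌈(4:ℝ)/ε⌉₊ + 1 : ℕ) ≤ n := le_trans (le_max_right _ _) hn
    have h4 := Nat.le_ceil ((4:ℝ)/ε)
    have h5 : ((⌈(4:ℝ)/ε⌉₊ + 1 : ℕ) : ℝ) ≤ n := by exact_mod_cast h3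
    push_cast at h5
    linarith
  have hb := block_count S D a n hD1
  rw [cnt_eq]
  have hb' : ((S ∩ Set.Ico a (a+n)).ncard : ℝ) ≤ (↑(n / D) + 1) +
      ∑ d ∈ Finset.Icc 1 D, (({m | m ∈ S ∧ m + d ∈ S} ∩ Set.Ico a (a+n)).ncard : ℝ) := by
    exact_mod_cast hb
  have hD0 : (0:ℝ) < D := by positivity
  have t1 : ((n/D : ℕ) : ℝ) ≤ ε/4 * n := by
    have c1 : ((n/D : ℕ) : ℝ) ≤ (n:ℝ)/D := Nat.cast_div_le
    have h4 : 1/(D:ℝ) ≤ ε/4 := by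
      rw [div_le_div_iff₀ hD0 (by norm_num : (0:ℝ) < 4)]
      have := (div_le_iff₀ hε).1 hDε
      linarith
    calc ((n/D : ℕ) : ℝ) ≤ (n:ℝ)/D := c1
    _ = n * (1/D) := by ring
    _ ≤ n * (ε/4) := mul_le_mul_of_nonneg_left h4 (by positivity)
    _ = ε/4 * n := by ring
  have t2 : (1:ℝ) ≤ ε/4 * n := by
    have := (div_le_iff₀ hε).1 hn2
    linarith
  have t3 : ∑ d ∈ Finset.Icc 1 D, (({m | m ∈ S ∧ m + d ∈ S} ∩ Set.Ico a (a+n)).ncard : ℝ)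
      ≤ ε/4 * n := by
    have each : ∀ d ∈ Finset.Icc 1 D,
        (({m | m ∈ S ∧ m + d ∈ S} ∩ Set.Ico a (a+n)).ncard : ℝ) ≤ ε/(4*D) * n := by
      intro d hd
      have := hN d hd a n (le_trans (Finset.le_sup hd) hn1)
      rwa [cnt_eq] at this
    calc ∑ d ∈ Finset.Icc 1 D, (({m | m ∈ S ∧ m + d ∈ S} ∩ Set.Ico a (a+n)).ncard : ℝ)
        ≤ ∑ _d ∈ Finset.Icc 1 D, ε/(4*D) * n := Finset.sum_le_sum each
    _ = (Finset.Icc 1 D).card * (ε/(4*D) * n) := by rw [Finset.sum_const, nsmul_eq_mul]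
    _ = D * (ε/(4*D) * n) := by rw [Nat.card_Icc]; norm_num
    _ = ε/4 * n := by field_simp
  have hεn : 0 ≤ ε/4 * n := by positivity
  linarith

section Dyn
variable {X : Type*} [TopologicalSpace X]

lemma closure_image_closure' {f : X → X} (hf : Continuous f) (s : Set X) :
    closure (f '' closure s) = closure (f '' s) := by
  apply subset_antisymm
  · have h1 : f '' closure s ⊆ closure (f '' s) := image_closure_subset_closure_image hf
    calc closure (f '' closure s) ⊆ closure (closure (f '' s)) := closure_mono h1
    _ = closure (f '' s) := closure_closure
  · exact closure_mono (image_mono subset_closure)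

lemma stab_closed [NoetherianSpace X] (g : ℕ → Set X) (hcl : ∀ m, IsClosed (g m))
    (hmono : ∀ m, g (m+1) ⊆ g m) : ∃ m₀, ∀ m, m₀ ≤ m → g m = g m₀ := by
  set G : ℕ → Closeds X := fun m => ⟨g m, hcl m⟩ with hG
  have hanti : ∀ m k, g (m + k) ⊆ g m := by
    intro m k; induction k with
    | zero => exact le_rfl
    | succ k ih => exact subset_trans (by rw [← Nat.add_assoc]; exact hmono (m+k)) ih
  obtain ⟨c, ⟨m₀, rfl⟩, hmin⟩ := (wellFounded_lt (α := Closeds X)).has_min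
    (Set.range G) ⟨G 0, 0, rfl⟩
  refine ⟨m₀, fun m hm => ?_⟩
  have hle : G m ≤ G m₀ := by
    have := hanti m₀ (m - m₀)
    rw [Nat.add_sub_cancel' hm] at this
    exact this
  have hnlt := hmin (G m) ⟨m, rfl⟩
  have heq : G m = G m₀ := hle.lt_or_eq.resolve_left hnlt
  exact congrArg SetLike.coe heq

theorem abstract_dml [NoetherianSpace X]
    (f : X → X) (hf : Continuous f) (x : X) (V : Set X) (hV : IsClosed V) :
    ∃ (F : Finset (ℕ × ℕ)) (B : Set ℕ),
      (∀ p ∈ F, 1 ≤ p.1) ∧ BanachDensityZero B ∧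
      {n : ℕ | f^[n] x ∈ V} = (⋃ p ∈ F, {n : ℕ | ∃ ℓ : ℕ, n = p.1 * ℓ + p.2}) ∪ B := by
  classical
  -- tails of the orbit along residue class c mod d
  set tl : ℕ → ℕ → ℕ → Set X := fun c d m => (fun k => f^[c + d*k] x) '' {k | m ≤ k} with htl
  have tl_mem : ∀ c d m k, m ≤ k → f^[c + d*k] x ∈ tl c d m := by
    intro c d m k hk; exact ⟨k, hk, rfl⟩
  have tl_im : ∀ c d m, f '' tl c d m = tl (c+1) d m := by
    intro c d m
    rw [htl]; simp only [← Set.image_comp]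
    apply Set.image_congr
    intro k _
    show f (f^[c + d*k] x) = f^[c+1+d*k] x
    rw [← Function.iterate_succ_apply' f]
    congr 1
    omega
  have tl_anti : ∀ c d m, tl c d (m+1) ⊆ tl c d m := by
    intro c d m
    exact Set.image_mono (fun k hk => le_trans (Nat.le_succ m) hk)
  have tl_shift : ∀ c d m, tl (c+d) d m = tl c d (m+1) := by
    intro c d m
    ext y; constructor
    · rintro ⟨k, hk, rfl⟩
      have hk' : m ≤ k := hk
      refine ⟨k+1, (by omega : m + 1 ≤ k + 1), ?_⟩
      show f^[c + d*(k+1)] x = f^[c + d + d*k] x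
      congr 1; ring
    · rintro ⟨k, hk, rfl⟩
      have hk' : m + 1 ≤ k := hk
      refine ⟨k-1, (by omega : m ≤ k - 1), ?_⟩
      show f^[c + d + d*(k-1)] x = f^[c + d*k] x
      congr 1
      have hk1 : k - 1 + 1 = k := by omega
      calc c + d + d*(k-1) = c + d*(k-1+1) := by ring
      _ = c + d*k := by rw [hk1]
  -- stabilized omega-limit sets
  have hZex : ∀ c d : ℕ, ∃ (Z : Set X) (m₀ : ℕ), IsClosed Z ∧
      ∀ m, m₀ ≤ m → closure (tl c d m) = Z := by
    intro c d
    obtain ⟨m₀, hm₀⟩ := stab_closed (fun m => closure (tl c d m))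
      (fun m => isClosed_closure) (fun m => closure_mono (tl_anti c d m))
    exact ⟨closure (tl c d m₀), m₀, isClosed_closure, hm₀⟩
  choose Z M hZcl hZeq using fun c d => (hZex c d)
  have Zstep : ∀ c d, closure (f '' Z c d) = Z (c+1) d := by
    intro c d
    set m := max (M c d) (M (c+1) d) with hm
    calc closure (f '' Z c d) = closure (f '' closure (tl c d m)) := by
          rw [hZeq c d m (le_max_left _ _)]
    _ = closure (f '' tl c d m) := closure_image_closure' hf _
    _ = closure (tl (c+1) d m) := by rw [tl_im]
    _ = Z (c+1) d := hZeq (c+1) d m (le_max_right _ _)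
  have Zper : ∀ c d, Z (c+d) d = Z c d := by
    intro c d
    set m := max (M (c+d) d) (M c d) with hm
    calc Z (c+d) d = closure (tl (c+d) d m) := (hZeq _ _ m (le_max_left _ _)).symm
    _ = closure (tl c d (m+1)) := by rw [tl_shift]
    _ = Z c d := hZeq c d (m+1) (le_trans (le_max_right _ _) (Nat.le_succ m))
  have ZperK : ∀ c d k, Z (c + d*k) d = Z c d := by
    intro c d k
    induction k with
    | zero => simp
    | succ k ih =>
        have h1 : c + d*(k+1) = (c + d*k) + d := by ring
        rw [h1, Zper, ih]
  have Zstep_it : ∀ j c d, closure (f^[j] '' Z c d) = Z (c+j) d := by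
    intro j
    induction j with
    | zero => intro c d; simpa using (hZcl c d).closure_eq
    | succ j ih =>
        intro c d
        calc closure (f^[j+1] '' Z c d) = closure (f '' (f^[j] '' Z c d)) := by
              rw [Function.iterate_succ' f j, Set.image_comp]
        _ = closure (f '' closure (f^[j] '' Z c d)) := (closure_image_closure' hf _).symm
        _ = closure (f '' Z (c+j) d) := by rw [ih]
        _ = Z (c+j+1) d := Zstep (c+j) d
  set Y : Set X := Z 0 1 with hYdef
  have hYcl : IsClosed Y := hZcl 0 1
  set N₀ := M 0 1 with hN₀
  have tlY : ∀ m, N₀ ≤ m → closure (tl 0 1 m) = Y := fun m hm => hZeq 0 1 m hm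
  have hYx : ∀ n, N₀ ≤ n → f^[n] x ∈ Y := by
    intro n hn
    have h1 : f^[0 + 1*n] x ∈ tl 0 1 n := tl_mem 0 1 n n le_rfl
    have h2 : tl 0 1 n ⊆ Y := by
      rw [← tlY n hn]; exact subset_closure
    have h3 := h2 h1
    rwa [show 0 + 1*n = n by ring] at h3
  have hYne : Y.Nonempty := ⟨f^[N₀] x, hYx N₀ le_rfl⟩
  have hYunion : ∀ d, 1 ≤ d → (⋃ c ∈ Finset.range d, Z c d) = Y := by
    intro d hd
    set m := max N₀ ((Finset.range d).sup (fun c => M c d)) with hm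
    apply subset_antisymm
    · intro y hy
      simp only [Set.mem_iUnion] at hy
      obtain ⟨c, hc, hy⟩ := hy
      have e1 : Z c d = closure (tl c d m) :=
        (hZeq c d m (le_trans (Finset.le_sup (f := fun c => M c d) hc) (le_max_right _ _))).symm
      have e2 : tl c d m ⊆ tl 0 1 m := by
        rintro _ ⟨k, hk, rfl⟩
        have hk' : m ≤ k := hk
        refine ⟨c + d*k, ?_, ?_⟩
        · show m ≤ c + d*k
          have h5 : k ≤ d * k := Nat.le_mul_of_pos_left k hd
          omega
        · show f^[0 + 1*(c + d*k)] x = f^[c + d*k] x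
          congr 1; ring
      rw [e1] at hy
      rw [← tlY m (le_max_left _ _)]
      exact closure_mono e2 hy
    · have e3 : tl 0 1 (d*(m+1)) ⊆ ⋃ c ∈ Finset.range d, tl c d m := by
        rintro _ ⟨k, hk, rfl⟩
        have hk' : d*(m+1) ≤ k := hk
        simp only [Set.mem_iUnion]
        refine ⟨k % d, Finset.mem_range.2 (Nat.mod_lt _ hd), k / d, ?_, ?_⟩
        · show m ≤ k / d
          rw [Nat.le_div_iff_mul_le hd]
          calc m * d ≤ d * m + d := by rw [Nat.mul_comm]; omega
          _ = d*(m+1) := by ring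
          _ ≤ k := hk'
        · show f^[k % d + d * (k / d)] x = f^[0 + 1*k] x
          congr 1
          rw [Nat.mod_add_div]
          omega
      have e4 : N₀ ≤ d*(m+1) := by
        have h5 : m + 1 ≤ d * (m+1) := Nat.le_mul_of_pos_left (m+1) hd
        have h6 : N₀ ≤ m := le_max_left _ _
        omega
      calc Y = closure (tl 0 1 (d*(m+1))) := (tlY _ e4).symm
      _ ⊆ closure (⋃ c ∈ Finset.range d, tl c d m) := closure_mono e3
      _ ⊆ ⋃ c ∈ Finset.range d, Z c d := by
          apply closure_minimal
          · intro y hy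
            simp only [Set.mem_iUnion] at hy ⊢
            obtain ⟨c, hc, hy⟩ := hy
            refine ⟨c, hc, ?_⟩
            rw [← hZeq c d m (le_trans (Finset.le_sup (f := fun c => M c d) hc) (le_max_right _ _))]
            exact subset_closure hy
          · exact Set.Finite.isClosed_biUnion (Finset.finite_toSet _)
              (fun c _ => hZcl c d)
  -- decomposition of Y into maximal irreducible closed pieces
  obtain ⟨S0, hS0fin, hS0cl, hS0irr, hS0U⟩ :=
    NoetherianSpace.exists_finite_set_isClosed_irreducible hYcl
  set Mx : Set (Set X) := {t ∈ S0 | ∀ t' ∈ S0, t ⊆ t' → t = t'} with hMxdef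
  have hMxsub : Mx ⊆ S0 := fun t ht => ht.1
  have hMxfin : Mx.Finite := hS0fin.subset hMxsub
  have hMxcl : ∀ t ∈ Mx, IsClosed t := fun t ht => hS0cl t (hMxsub ht)
  have hMxirr : ∀ t ∈ Mx, IsIrreducible t := fun t ht => hS0irr t (hMxsub ht)
  have hMxmax : ∀ t ∈ Mx, ∀ t' ∈ Mx, t ⊆ t' → t = t' :=
    fun t ht t' ht' h => ht.2 t' (hMxsub ht') h
  have hcover : ∀ t ∈ S0, ∃ u ∈ Mx, t ⊆ u := by
    intro t ht
    obtain ⟨u, hu, hmax⟩ := Set.Finite.exists_maximalFor id {u ∈ S0 | t ⊆ u}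
      (hS0fin.subset (fun z hz => hz.1)) ⟨t, ht, subset_rfl⟩
    refine ⟨u, ⟨hu.1, ?_⟩, hu.2⟩
    intro t' ht' hsub
    exact subset_antisymm hsub (hmax ⟨ht', subset_trans hu.2 hsub⟩ hsub)
  have hMxU : ⋃₀ Mx = Y := by
    apply subset_antisymm
    · rintro y ⟨t, ht, hyt⟩
      rw [hS0U]
      exact ⟨t, hMxsub ht, hyt⟩
    · intro y hy
      rw [hS0U] at hy
      obtain ⟨t, ht, hyt⟩ := hy
      obtain ⟨u, hu, hsub⟩ := hcover t ht
      exact ⟨u, hu, hsub hyt⟩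
  have hirr_union : ∀ (s : Set X), IsIrreducible s → ∀ (T : Set (Set X)), T.Finite →
      (∀ t ∈ T, IsClosed t) → s ⊆ ⋃₀ T → ∃ t ∈ T, s ⊆ t := by
    intro s hs T hT hcl hsub
    have h1 := isIrreducible_iff_sUnion_isClosed.1 hs hT.toFinset
      (by intro z hz; exact hcl z (by rwa [Set.Finite.mem_toFinset] at hz))
      (by rwa [Set.Finite.coe_toFinset])
    obtain ⟨z, hz, hsz⟩ := h1
    exact ⟨z, (Set.Finite.mem_toFinset hT).1 hz, hsz⟩
  have hfY : closure (f '' Y) = Y := by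
    have h1 := Zstep 0 1
    have h2 := Zper 0 1
    rw [hYdef]
    rw [show (0:ℕ)+1 = 1 from rfl] at h1 h2
    rw [h1]; exact h2
  have hσex : ∀ t ∈ Mx, ∃ u ∈ Mx, closure (f '' t) ⊆ u := by
    intro t ht
    have h1 : IsIrreducible (closure (f '' t)) :=
      ((hMxirr t ht).image f hf.continuousOn).closure
    have h2 : closure (f '' t) ⊆ Y := by
      have h3 : f '' t ⊆ f '' Y :=
        Set.image_mono (by rw [← hMxU]; exact Set.subset_sUnion_of_mem ht)
      calc closure (f '' t) ⊆ closure (f '' Y) := closure_mono h3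
      _ = Y := hfY
    rw [← hMxU] at h2
    exact hirr_union _ h1 Mx hMxfin hMxcl h2
  choose! σ hσMx hσsub using hσex
  have hcovf : ∀ u ∈ Mx, ∃ t ∈ Mx, u ⊆ closure (f '' t) := by
    intro u hu
    have h1 : u ⊆ closure (f '' Y) := by
      rw [hfY, ← hMxU]; exact Set.subset_sUnion_of_mem hu
    have h2 : f '' Y ⊆ ⋃₀ ((fun t => closure (f '' t)) '' Mx) := by
      rw [← hMxU]
      rintro _ ⟨y, ⟨t, ht, hyt⟩, rfl⟩
      exact ⟨closure (f '' t), ⟨t, ht, rfl⟩, subset_closure ⟨y, hyt, rfl⟩⟩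
    have h3 : closure (f '' Y) ⊆ ⋃₀ ((fun t => closure (f '' t)) '' Mx) := by
      apply closure_minimal h2
      rw [Set.sUnion_image]
      exact Set.Finite.isClosed_biUnion hMxfin (fun t _ => isClosed_closure)
    obtain ⟨w, ⟨t, ht, rfl⟩, hsub⟩ := hirr_union u (hMxirr u hu) _ (hMxfin.image _)
      (by rintro _ ⟨t, ht, rfl⟩; exact isClosed_closure) (subset_trans h1 h3)
    exact ⟨t, ht, hsub⟩
  have hσsurj : ∀ u ∈ Mx, ∃ t ∈ Mx, σ t = u := by
    intro u hu
    obtain ⟨t, ht, hsub⟩ := hcovf u hu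
    have h4 : u ⊆ σ t := subset_trans hsub (hσsub t ht)
    exact ⟨t, ht, (hMxmax u hu (σ t) (hσMx t ht) h4).symm⟩
  have hbij : Set.BijOn σ Mx Mx := by
    apply (hMxfin.surjOn_iff_bijOn_of_mapsTo (fun t ht => hσMx t ht)).1
    intro u hu
    obtain ⟨t, ht, hσt⟩ := hσsurj u hu
    exact ⟨t, ht, hσt⟩
  have hinj : Set.InjOn σ Mx := hbij.injOn
  have hσeq : ∀ t ∈ Mx, closure (f '' t) = σ t := by
    intro t ht
    obtain ⟨t₁, ht₁, hsub⟩ := hcovf (σ t) (hσMx t ht)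
    have h1 : σ t ⊆ σ t₁ := subset_trans hsub (hσsub t₁ ht₁)
    have h2 : σ t = σ t₁ := hMxmax _ (hσMx t ht) _ (hσMx t₁ ht₁) h1
    have h3 : t = t₁ := hinj ht ht₁ h2
    subst h3
    exact subset_antisymm (hσsub t ht) (h2 ▸ hsub)
  have hσit : ∀ j, ∀ t ∈ Mx, σ^[j] t ∈ Mx ∧ closure (f^[j] '' t) = σ^[j] t := by
    intro j
    induction j with
    | zero => intro t ht; exact ⟨ht, by simpa using (hMxcl t ht).closure_eq⟩
    | succ j ih =>
        intro t ht
        obtain ⟨h1, h2⟩ := ih t ht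
        rw [Function.iterate_succ_apply' σ]
        refine ⟨hσMx _ h1, ?_⟩
        calc closure (f^[j+1] '' t) = closure (f '' (f^[j] '' t)) := by
              rw [Function.iterate_succ' f, Set.image_comp]
        _ = closure (f '' closure (f^[j] '' t)) := (closure_image_closure' hf _).symm
        _ = closure (f '' σ^[j] t) := by rw [h2]
        _ = σ (σ^[j] t) := hσeq _ h1
  -- KEY: visits to a closed set containing no maximal piece have Banach density zero
  have key : ∀ W : Closeds X, (∀ t ∈ Mx, ¬ t ⊆ (W : Set X)) →
      BanachDensityZero {n | f^[n] x ∈ (W : Set X)} := by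
    intro W
    refine (wellFounded_lt (α := Closeds X)).induction
      (C := fun W => (∀ t ∈ Mx, ¬ t ⊆ (W : Set X)) →
        BanachDensityZero {n | f^[n] x ∈ (W : Set X)}) W ?_
    clear W
    intro W IH hW
    by_contra hB
    obtain ⟨d, hd, hB2⟩ := exists_diff_not_bdz hB
    set W' : Closeds X := ⟨(W : Set X) ∩ f^[d] ⁻¹' (W : Set X),
      W.isClosed.inter (W.isClosed.preimage (hf.iterate d))⟩ with hW'def
    have hW'coe : (W' : Set X) = (W : Set X) ∩ f^[d] ⁻¹' (W : Set X) := rfl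
    have hset : {m | m ∈ {n | f^[n] x ∈ (W:Set X)} ∧ m + d ∈ {n | f^[n] x ∈ (W:Set X)}}
        = {n | f^[n] x ∈ (W' : Set X)} := by
      ext n
      simp only [Set.mem_setOf_eq, hW'coe, Set.mem_inter_iff, Set.mem_preimage]
      constructor
      · rintro ⟨h1, h2⟩
        refine ⟨h1, ?_⟩
        rwa [← Function.iterate_add_apply f d n x, show d + n = n + d by omega]
      · rintro ⟨h1, h2⟩
        refine ⟨h1, ?_⟩
        rwa [show n + d = d + n by omega, Function.iterate_add_apply f d n x]
    have hle : W' ≤ W := fun y hy => hy.1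
    rcases hle.lt_or_eq with hlt | heq
    · exact hB2 (hset ▸ IH W' hlt
        (fun t ht hsub => hW t ht (subset_trans hsub hle)))
    · have hWsub : (W:Set X) ⊆ f^[d] ⁻¹' (W:Set X) := by
        intro y hy
        have hy' : y ∈ (W' : Set X) := by rw [heq]; exact hy
        exact hy'.2
      have hne : {m | m ∈ {n | f^[n] x ∈ (W:Set X)} ∧
          m + d ∈ {n | f^[n] x ∈ (W:Set X)}}.Nonempty := by
        by_contra h
        rw [Set.not_nonempty_iff_eq_empty] at h
        exact hB2 (by rw [h]; exact bdz_finite Set.finite_empty)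
      obtain ⟨n₀, hn₀⟩ := hne
      have horb : ∀ k, f^[n₀ + d*k] x ∈ (W : Set X) := by
        intro k
        induction k with
        | zero => simpa using hn₀.1
        | succ k ih =>
            have h1 := hWsub ih
            rw [Set.mem_preimage, ← Function.iterate_add_apply f d (n₀ + d*k) x] at h1
            rwa [show d + (n₀ + d*k) = n₀ + d*(k+1) by ring] at h1
      have hZsub : Z n₀ d ⊆ (W : Set X) := by
        rw [← hZeq n₀ d (M n₀ d) le_rfl]
        apply closure_minimal ?_ W.isClosed
        rintro _ ⟨k, _, rfl⟩
        exact horb k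
      obtain ⟨t₀, ht₀⟩ : Mx.Nonempty := by
        obtain ⟨y, hy⟩ := hYne
        rw [← hMxU] at hy
        obtain ⟨t, ht, _⟩ := hy
        exact ⟨t, ht⟩
      have h6 : t₀ ⊆ ⋃₀ ((fun c => Z c d) '' ((Finset.range d : Finset ℕ) : Set ℕ)) := by
        have h7 : t₀ ⊆ Y := by rw [← hMxU]; exact Set.subset_sUnion_of_mem ht₀
        rw [← hYunion d hd] at h7
        intro y hy
        have h8 := h7 hy
        simp only [Set.mem_iUnion] at h8
        obtain ⟨c, hc, hyc⟩ := h8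
        exact ⟨Z c d, ⟨c, by simpa using hc, rfl⟩, hyc⟩
      obtain ⟨w, ⟨c₀, hc₀, rfl⟩, hsub₀⟩ := hirr_union t₀ (hMxirr t₀ ht₀) _
        (((Finset.range d).finite_toSet).image _)
        (by rintro _ ⟨c, _, rfl⟩; exact hZcl c d) h6
      have hc₀d : c₀ < d := by simpa using hc₀
      set j := n₀ % d + d - c₀ with hj
      have hσj := hσit j t₀ ht₀
      have h8 : σ^[j] t₀ ⊆ Z (c₀ + j) d := by
        rw [← hσj.2, ← Zstep_it j c₀ d]
        exact closure_mono (Set.image_mono hsub₀)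
      have h9 : Z (c₀ + j) d = Z n₀ d := by
        have e1 : c₀ + j = n₀ % d + d := by
          have := Nat.mod_lt n₀ (show 0 < d by omega)
          omega
        rw [e1]
        have e2 : Z (n₀ % d + d) d = Z (n₀ % d) d := Zper (n₀ % d) d
        rw [e2]
        calc Z (n₀ % d) d = Z (n₀ % d + d*(n₀/d)) d := (ZperK _ d _).symm
        _ = Z n₀ d := by rw [Nat.mod_add_div n₀ d]
      exact hW (σ^[j] t₀) hσj.1 (subset_trans h8 (by rw [h9]; exact hZsub))
  -- membership pattern of the orbit in the maximal pieces
  set MxF : Finset (Set X) := hMxfin.toFinset with hMxF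
  set C : ℕ → Finset (Set X) := fun n => MxF.filter (fun t => f^[n] x ∈ t) with hC
  have hCmem : ∀ n t, t ∈ C n ↔ (t ∈ Mx ∧ f^[n] x ∈ t) := by
    intro n t
    rw [hC]
    simp only [Finset.mem_filter, hMxF, Set.Finite.mem_toFinset]
  have hCmap : ∀ n, ∀ t ∈ C n, σ t ∈ C (n+1) := by
    intro n t ht
    rw [hCmem] at ht ⊢
    obtain ⟨h1, h2⟩ := ht
    refine ⟨hσMx t h1, ?_⟩
    rw [Function.iterate_succ_apply' f]
    exact (hσsub t h1) (subset_closure ⟨_, h2, rfl⟩)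
  have hCinj : ∀ n, Set.InjOn σ (C n) := by
    intro n t ht u hu htu
    exact hinj ((hCmem n t).1 ht).1 ((hCmem n u).1 hu).1 htu
  have hCcard : ∀ n, (C n).card ≤ (C (n+1)).card := by
    intro n
    have h1 : (C n).image σ ⊆ C (n+1) := by
      intro u hu
      rw [Finset.mem_image] at hu
      obtain ⟨t, ht, rfl⟩ := hu
      exact hCmap n t ht
    calc (C n).card = ((C n).image σ).card := (Finset.card_image_of_injOn (hCinj n)).symm
    _ ≤ (C (n+1)).card := Finset.card_le_card h1
  have hmono : Monotone (fun n => (C n).card) := monotone_nat_of_le_succ hCcard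
  have hbdd : BddAbove (Set.range fun n => (C n).card) := by
    refine ⟨MxF.card, ?_⟩
    rintro _ ⟨n, rfl⟩
    exact Finset.card_le_card (Finset.filter_subset _ _)
  obtain ⟨n₁, hn₁⟩ : ∃ n₁, (C n₁).card = sSup (Set.range fun n => (C n).card) := by
    have := Nat.sSup_mem (⟨(C 0).card, 0, rfl⟩ : (Set.range fun n => (C n).card).Nonempty) hbdd
    obtain ⟨n₁, h⟩ := this
    exact ⟨n₁, h⟩
  have hstab : ∀ n, n₁ ≤ n → (C n).card = (C n₁).card := by
    intro n hn
    rw [hn₁]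
    apply le_antisymm
    · exact le_csSup hbdd ⟨n, rfl⟩
    · rw [← hn₁]; exact hmono hn
  have himg : ∀ n, n₁ ≤ n → (C n).image σ = C (n+1) := by
    intro n hn
    apply Finset.eq_of_subset_of_card_le
    · intro u hu
      rw [Finset.mem_image] at hu
      obtain ⟨t, ht, rfl⟩ := hu
      exact hCmap n t ht
    · rw [hstab (n+1) (by omega), Finset.card_image_of_injOn (hCinj n), hstab n hn]
  -- pigeonhole: eventual periodicity
  obtain ⟨n₂, p, hp, hn₂, heq2⟩ : ∃ n₂ p, 1 ≤ p ∧ n₁ ≤ n₂ ∧ C (n₂ + p) = C n₂ := by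
    have hpig := Set.Infinite.exists_ne_map_eq_of_mapsTo (s := Set.Ici n₁)
      (t := ((MxF.powerset : Finset (Finset (Set X))) : Set (Finset (Set X)))) (f := C)
      (Set.Ici_infinite n₁)
      (fun n _ => by
        simp only [Finset.coe_powerset, Set.mem_preimage, Finset.mem_coe, Finset.mem_powerset]
        exact Finset.filter_subset _ _)
      (Finset.finite_toSet _)
    obtain ⟨i, hi, jj, hjj, hij, hCij⟩ := hpig
    rcases Nat.lt_or_ge i jj with hlt | hge
    · exact ⟨i, jj - i, by omega, hi, by rw [show i + (jj - i) = jj by omega]; exact hCij.symm⟩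
    · have hlt2 : jj < i := by omega
      exact ⟨jj, i - jj, by omega, hjj, by rw [show jj + (i - jj) = i by omega]; exact hCij⟩
  have hper1 : ∀ k, C (n₂ + k + p) = C (n₂ + k) := by
    intro k
    induction k with
    | zero => simpa using heq2
    | succ k ih =>
        have e1 : n₂ + (k+1) + p = (n₂ + k + p) + 1 := by ring
        have e2 : n₂ + (k+1) = (n₂ + k) + 1 := by ring
        rw [e1, e2, ← himg _ (by omega), ← himg _ (by omega), ih]
  have hperk : ∀ n, n₂ ≤ n → ∀ k, C (n + p*k) = C n := by
    intro n hn k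
    induction k with
    | zero => simp
    | succ k ih =>
        have e1 : n + p*(k+1) = (n₂ + ((n + p*k) - n₂)) + p := by
          have h5 : n₂ ≤ n + p*k := le_trans hn (Nat.le_add_right _ _)
          have h6 : n₂ + ((n + p*k) - n₂) = n + p*k := Nat.add_sub_cancel' h5
          rw [h6]; ring
        rw [e1, hper1, Nat.add_sub_cancel' (le_trans hn (Nat.le_add_right _ _)), ih]
  -- final assembly
  set n₃ := max n₂ N₀ with hn₃
  set U : Set X := ⋃₀ {t | t ∈ Mx ∧ t ⊆ V} with hU
  have hUV : U ⊆ V := by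
    rintro y ⟨t, ht, hyt⟩
    exact ht.2 hyt
  have hUmem : ∀ n, (f^[n] x ∈ U ↔ ∃ t ∈ C n, t ⊆ V) := by
    intro n
    constructor
    · rintro ⟨t, ⟨ht1, ht2⟩, hyt⟩
      exact ⟨t, (hCmem n t).2 ⟨ht1, hyt⟩, ht2⟩
    · rintro ⟨t, ht, htV⟩
      obtain ⟨h1, h2⟩ := (hCmem n t).1 ht
      exact ⟨t, ⟨h1, htV⟩, h2⟩
  set W₀ : Set X := V ∩ ⋃₀ {t | t ∈ Mx ∧ ¬ t ⊆ V} with hW₀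
  have hW₀cl : IsClosed W₀ := by
    apply hV.inter
    rw [Set.sUnion_eq_biUnion]
    exact Set.Finite.isClosed_biUnion (hMxfin.subset (fun z hz => hz.1))
      (fun t ht => hMxcl t ht.1)
  have hW₀no : ∀ t ∈ Mx, ¬ t ⊆ W₀ := by
    intro t ht hsub
    have h1 : t ⊆ ⋃₀ ((fun t' => V ∩ t') '' {t' | t' ∈ Mx ∧ ¬ t' ⊆ V}) := by
      intro y hy
      obtain ⟨hyV, t', ht', hyt'⟩ := hsub hy
      exact ⟨V ∩ t', ⟨t', ht', rfl⟩, hyV, hyt'⟩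
    obtain ⟨w, ⟨t', ht', rfl⟩, hsub'⟩ := hirr_union t (hMxirr t ht) _
      ((hMxfin.subset (fun z hz => hz.1)).image _)
      (by rintro _ ⟨t', ht', rfl⟩; exact hV.inter (hMxcl t' ht'.1)) h1
    have h2 : t ⊆ t' := subset_trans hsub' Set.inter_subset_right
    have h3 : t = t' := hMxmax t ht t' ht'.1 h2
    exact ht'.2 (by rw [← h3]; exact subset_trans hsub' Set.inter_subset_left)
  have hB₀ : BanachDensityZero {n | f^[n] x ∈ W₀} := key ⟨W₀, hW₀cl⟩ hW₀no
  refine ⟨((Finset.range p).filter (fun c => f^[n₃ + c] x ∈ U)).image (fun c => (p, n₃ + c)),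
    {n | f^[n] x ∈ W₀} ∪ ({n | f^[n] x ∈ V} ∩ Set.Iio n₃), ?_, ?_, ?_⟩
  · rintro ⟨p1, p2⟩ hp12
    rw [Finset.mem_image] at hp12
    obtain ⟨c, _, hceq⟩ := hp12
    have : p = p1 := congrArg Prod.fst hceq
    simpa [← this] using hp
  · exact bdz_union hB₀ (bdz_finite ((Set.finite_Iio n₃).subset Set.inter_subset_right))
  · ext n
    simp only [Set.mem_union, Set.mem_setOf_eq, Set.mem_iUnion, Set.mem_inter_iff,
      Set.mem_Iio, Finset.mem_image, Finset.mem_filter, Finset.mem_range]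
    constructor
    · intro hn
      by_cases hlt : n < n₃
      · exact Or.inr (Or.inr ⟨hn, hlt⟩)
      push_neg at hlt
      by_cases hcase : ∃ t ∈ C n, t ⊆ V
      · left
        obtain ⟨t, htC, htV⟩ := hcase
        set c := (n - n₃) % p with hc
        set ℓ := (n - n₃) / p with hl
        have hcp : c < p := Nat.mod_lt _ (by omega)
        have e0 : c + p * ℓ = n - n₃ := Nat.mod_add_div _ _
        have e1 : n₃ + (c + p*ℓ) = n := by rw [e0]; exact Nat.add_sub_cancel' hlt
        have hnrep : n = p * ℓ + (n₃ + c) := by rw [← e1]; ring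
        have hCeq : C n = C (n₃ + c) := by
          have h7 := hperk (n₃ + c) (by omega) ℓ
          rw [show n₃ + c + p*ℓ = n from by rw [← e1]; ring] at h7
          exact h7
        refine ⟨(p, n₃ + c), ⟨c, ⟨hcp, ?_⟩, rfl⟩, ℓ, hnrep⟩
        rw [hUmem]
        exact ⟨t, hCeq ▸ htC, htV⟩
      · refine Or.inr (Or.inl ?_)
        have hYn : f^[n] x ∈ Y := hYx n (by omega)
        rw [← hMxU] at hYn
        obtain ⟨t, ht, hyt⟩ := hYn
        have hnotV : ¬ t ⊆ V := fun hc => hcase ⟨t, (hCmem n t).2 ⟨ht, hyt⟩, hc⟩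
        exact ⟨hn, t, ⟨ht, hnotV⟩, hyt⟩
    · intro hn
      rcases hn with ⟨pp, ⟨c, ⟨hcp, hcU⟩, rfl⟩, ℓ, hnrep⟩ | h | h
      · obtain ⟨t, htC, htV⟩ := (hUmem (n₃+c)).1 hcU
        have hCeq := hperk (n₃ + c) (by omega) ℓ
        have htn : t ∈ C n := by
          rw [show n = (n₃ + c) + p * ℓ from by rw [hnrep]; ring, hCeq]
          exact htC
        exact htV ((hCmem n t).1 htn).2
      · exact h.1
      · exact h.1

end Dyn


theorem orbit_meets_closed_set_in_AP_union_density_zero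
    (k A : Type*) [Field k] [CommRing A] [Algebra k A] [Algebra.FiniteType k A]
    (Φ : A →ₐ[k] A) (α : PrimeSpectrum A) (𝔞 : Ideal A)
    (S : Set ℕ)
    (hS : S = {n : ℕ | (PrimeSpectrum.comap Φ.toRingHom)^[n] α ∈
      PrimeSpectrum.zeroLocus (𝔞 : Set A)}) :
    ∃ (F : Finset (ℕ × ℕ)) (B : Set ℕ),
      (∀ p ∈ F, 1 ≤ p.1) ∧
      BanachDensityZero B ∧
      S = (⋃ p ∈ F, {n : ℕ | ∃ ℓ : ℕ, n = p.1 * ℓ + p.2}) ∪ B := by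
  haveI : IsNoetherianRing A := Algebra.FiniteType.isNoetherianRing k A
  obtain ⟨F, B, h1, h2, h3⟩ := abstract_dml (X := PrimeSpectrum A)
    (PrimeSpectrum.comap Φ.toRingHom) (PrimeSpectrum.continuous_comap _)
    α (PrimeSpectrum.zeroLocus (𝔞 : Set A)) (PrimeSpectrum.isClosed_zeroLocus _)
  exact ⟨F, B, h1, h2, by rw [hS]; exact h3⟩
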